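/- Let B be a Borel probability measure on [0,1] and let Z > 0. If T_B[δ_Z, δ_Z] = δ_Z, then B is a Dirac measure: B = δ_p for some p ∈ [0,1]. -/

import Mathlib

open MeasureTheory Filter Topology

/-- The transfer operator `T_B[u,v]`: the pushforward of `B ⊗ B ⊗ u ⊗ v` under
`(z₁, z₂, x₁, x₂) ↦ x₁ (1 - z₁) + x₂ z₂`. -/
noncomputable def transferT (B u v : Measure ℝ) : Measure ℝ :=
  Measure.map (fun q : (ℝ × ℝ) × ℝ × ℝ => q.2.1 * (1 - q.1.1) + q.2.2 * q.1.2)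
    ((B.prod B).prod (u.prod v))

/-- If `Z > 0` and `T_B[δ_Z, δ_Z] = δ_Z`, then the transfer kernel `B` is a Dirac mass:
`B = δ_p` for some `p ∈ [0,1]`. -/
theorem stmt14 (B : Measure ℝ) [IsProbabilityMeasure B] (hB : B (Set.Icc (0:ℝ) 1)ᶜ = 0)
    (Z : ℝ) (hZ : 0 < Z)
    (hfix : transferT B (Measure.dirac Z) (Measure.dirac Z) = Measure.dirac Z) :
    ∃ p ∈ Set.Icc (0:ℝ) 1, B = Measure.dirac p := by
  have hf : Measurable (fun q : (ℝ × ℝ) × ℝ × ℝ => q.2.1 * (1 - q.1.1) + q.2.2 * q.1.2) :=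
    ((measurable_fst.comp measurable_snd).mul ((measurable_const.sub (measurable_fst.comp measurable_fst)))).add ((measurable_snd.comp measurable_snd).mul (measurable_snd.comp measurable_fst))
  have hg : Measurable (fun p : ℝ × ℝ => Z * (1 - p.1) + Z * p.2) :=
    (measurable_const.mul (measurable_const.sub measurable_fst)).add (measurable_const.mul measurable_snd)
  -- reduce the fixed-point equation to a statement about B.prod B
  have hmap : Measure.map (fun p : ℝ × ℝ => Z * (1 - p.1) + Z * p.2) (B.prod B)
      = Measure.dirac Z := by
    have h1 : (Measure.dirac Z).prod (Measure.dirac Z) = Measure.dirac ((Z, Z) : ℝ × ℝ) := by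
      rw [Measure.prod_dirac, Measure.map_dirac' measurable_prodMk_right]
    have h2 : (B.prod B).prod (Measure.dirac ((Z, Z) : ℝ × ℝ))
        = Measure.map (fun x : ℝ × ℝ => (x, ((Z, Z) : ℝ × ℝ))) (B.prod B) :=
      Measure.prod_dirac _
    rw [← hfix, transferT, h1, h2, Measure.map_map hf measurable_prodMk_right]
    rfl
  -- evaluate at {Z}: the diagonal has full measure
  have hdiagset : (fun p : ℝ × ℝ => Z * (1 - p.1) + Z * p.2) ⁻¹' {Z}
      = {p : ℝ × ℝ | p.1 = p.2} := by
    ext ⟨a, b⟩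
    simp only [Set.mem_preimage, Set.mem_singleton_iff, Set.mem_setOf_eq]
    constructor
    · intro h; nlinarith
    · intro h; rw [h]; ring
  have hdiagmeas : MeasurableSet {p : ℝ × ℝ | p.1 = p.2} :=
    measurableSet_eq_fun measurable_fst measurable_snd
  have hdiag : (B.prod B) {p : ℝ × ℝ | p.1 = p.2} = 1 := by
    have := congrArg (fun μ : Measure ℝ => μ {Z}) hmap
    simpa [Measure.map_apply hg (measurableSet_singleton Z), hdiagset,
      Measure.dirac_apply' _ (measurableSet_singleton Z)] using this
  -- Fubini: ∫ B {x} dB x = 1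
  have hslice : ∀ x : ℝ, (Prod.mk x ⁻¹' {p : ℝ × ℝ | p.1 = p.2}) = {x} := by
    intro x; ext y; simp [eq_comm]
  have hint : ∫⁻ x, B {x} ∂B = 1 := by
    rw [← hdiag, Measure.prod_apply hdiagmeas]
    congr 1; ext x; rw [hslice]
  have hmeas : Measurable fun x : ℝ => B {x} := by
    have := measurable_measure_prodMk_left (ν := B) hdiagmeas
    simpa [hslice] using this
  -- a.e. x, B {x} = 1
  have hle : ∀ x : ℝ, B {x} ≤ 1 := fun x => prob_le_one
  have hae : ∀ᵐ x ∂B, B {x} = 1 := by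
    have hzero : ∫⁻ x, (1 - B {x}) ∂B = 0 := by
      rw [lintegral_sub hmeas (by rw [hint]; exact ENNReal.one_ne_top)
        (Filter.Eventually.of_forall hle), hint]
      simp
    have := (lintegral_eq_zero_iff (measurable_const.sub hmeas)).mp hzero
    filter_upwards [this] with x hx
    have : (1 : ENNReal) ≤ B {x} := by
      by_contra hlt
      push_neg at hlt
      exact absurd hx (by simp [tsub_eq_zero_iff_le, not_le.mpr hlt])
    exact le_antisymm (hle x) this
  -- extract a point p with B {p} = 1
  have hne : B ≠ 0 := IsProbabilityMeasure.ne_zero B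
  obtain ⟨p, hp⟩ := hae.exists
  have hpIcc : p ∈ Set.Icc (0:ℝ) 1 := by
    by_contra hpc
    have : B {p} ≤ B (Set.Icc (0:ℝ) 1)ᶜ := measure_mono (by simpa using hpc)
    rw [hp, hB] at this
    simp at this
  refine ⟨p, hpIcc, ?_⟩
  have hcompl : B {p}ᶜ = 0 := by
    have := prob_compl_eq_one_sub (μ := B) (measurableSet_singleton p)
    rw [hp] at this; simpa using this
  ext s hs
  rw [Measure.dirac_apply' _ hs]
  by_cases hps : p ∈ s
  · have h1 : (1:ENNReal) ≤ B s := hp ▸ measure_mono (Set.singleton_subset_iff.mpr hps)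
    simp [Set.indicator, hps, le_antisymm prob_le_one h1]
  · have : B s ≤ B {p}ᶜ := measure_mono (fun x hx => by
      simp only [Set.mem_compl_iff, Set.mem_singleton_iff]
      rintro rfl; exact hps hx)
    simp [Set.indicator, hps, le_antisymm (hcompl ▸ this) zero_le]
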